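/- Define the path z(α) for α ∈ ℝ by z₁(α) = (ν²m²/(2λε) − 3σm⁴/λ) e^{3α}, z₂(α) = (3σm⁶/μ − 3ν²m⁴/(4με)) e^{4α}, z₃(α) = −(νm²/(2ε)) e^{2α}, z₄(α) = e^{−α}, z₅(α) = m² e^{α}. Then for every α ∈ ℝ one has ∂W'/∂z_i(z(α)) = 0 for i = 1, 3, 4, 5 and ∂W'/∂z₂(z(α)) = μ e^{−α}, so that V(z(α)) = μ² e^{−2α}. Hence V(z(α)) → 0 while |z₅(α)| → ∞ as α → +∞: the deformed CDFM model has a runaway direction and inf_{ℂ⁵} V = 0. -/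

import Mathlib

open Complex Filter Topology

set_option maxHeartbeats 4000000 in
/-- Deformed CDFM model `W' = λ z₁(z₄z₅ − m²) + μ z₂z₄ + ν z₃z₅ + σ z₅³
+ ε z₃²z₄` with positive real parameters. Along the path
`z₁(α) = (ν²m²/(2λε) − 3σm⁴/λ) e^{3α}`, `z₂(α) = (3σm⁶/μ − 3ν²m⁴/(4με)) e^{4α}`,
`z₃(α) = −(νm²/(2ε)) e^{2α}`, `z₄(α) = e^{−α}`, `z₅(α) = m² e^{α}`, one has
`∂W'/∂z_i(z(α)) = 0` for `i = 1,3,4,5`, `∂W'/∂z₂(z(α)) = μ e^{−α}`, hence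
`V(z(α)) = μ² e^{−2α}`. Thus `V(z(α)) → 0` while `|z₅(α)| → ∞` as `α → +∞`:
a runaway direction, and `inf V = 0` over `ℂ⁵`. -/
theorem deformed_cdfm_runaway
    (lam mu nu m sig eps : ℝ)
    (hlam : 0 < lam) (hmu : 0 < mu) (hnu : 0 < nu) (hm : 0 < m)
    (hsig : 0 < sig) (heps : 0 < eps)
    (W' : (Fin 5 → ℂ) → ℂ)
    (hW : ∀ z, W' z = (lam : ℂ) * z 0 * (z 3 * z 4 - (m : ℂ) ^ 2) +
      (mu : ℂ) * z 1 * z 3 + (nu : ℂ) * z 2 * z 4 + (sig : ℂ) * (z 4) ^ 3 +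
      (eps : ℂ) * (z 2) ^ 2 * z 3)
    (V : (Fin 5 → ℂ) → ℝ)
    (hV : ∀ z, V z = ∑ i, ‖fderiv ℂ W' z (Pi.single i 1)‖ ^ 2)
    (zpath : ℝ → Fin 5 → ℂ)
    (hzpath : ∀ α : ℝ, zpath α =
      ![((nu ^ 2 * m ^ 2 / (2 * lam * eps) - 3 * sig * m ^ 4 / lam : ℝ) : ℂ) *
          Complex.exp (3 * (α : ℂ)),
        ((3 * sig * m ^ 6 / mu - 3 * nu ^ 2 * m ^ 4 / (4 * mu * eps) : ℝ) : ℂ) *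
          Complex.exp (4 * (α : ℂ)),
        -((nu * m ^ 2 / (2 * eps) : ℝ) : ℂ) * Complex.exp (2 * (α : ℂ)),
        Complex.exp (-(α : ℂ)),
        ((m ^ 2 : ℝ) : ℂ) * Complex.exp ((α : ℂ))]) :
    (∀ α : ℝ,
      fderiv ℂ W' (zpath α) (Pi.single 0 1) = 0 ∧
      fderiv ℂ W' (zpath α) (Pi.single 2 1) = 0 ∧
      fderiv ℂ W' (zpath α) (Pi.single 3 1) = 0 ∧
      fderiv ℂ W' (zpath α) (Pi.single 4 1) = 0 ∧
      fderiv ℂ W' (zpath α) (Pi.single 1 1) = (mu : ℂ) * Complex.exp (-(α : ℂ)) ∧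
      V (zpath α) = mu ^ 2 * Real.exp (-2 * α)) ∧
    Tendsto (fun α : ℝ => V (zpath α)) atTop (nhds 0) ∧
    Tendsto (fun α : ℝ => ‖zpath α 4‖) atTop atTop ∧
    IsGLB (Set.range V) 0 := by
  -- the explicit derivative
  set P : Fin 5 → (Fin 5 → ℂ) →L[ℂ] ℂ := fun i => ContinuousLinearMap.proj i with hP
  have hd : ∀ z : Fin 5 → ℂ, HasFDerivAt W'
      (((lam : ℂ) * (z 3 * z 4 - (m : ℂ) ^ 2)) • P 0
        + ((mu : ℂ) * z 3) • P 1
        + ((nu : ℂ) * z 4 + 2 * (eps : ℂ) * z 2 * z 3) • P 2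
        + ((lam : ℂ) * z 0 * z 4 + (mu : ℂ) * z 1 + (eps : ℂ) * z 2 ^ 2) • P 3
        + ((lam : ℂ) * z 0 * z 3 + (nu : ℂ) * z 2 + 3 * (sig : ℂ) * z 4 ^ 2) • P 4) z := by
    intro z
    have hWe : W' = fun z : Fin 5 → ℂ => (lam : ℂ) * z 0 * (z 3 * z 4 - (m : ℂ) ^ 2) +
        (mu : ℂ) * z 1 * z 3 + (nu : ℂ) * z 2 * z 4 + (sig : ℂ) * (z 4 * z 4) * z 4 +
        (eps : ℂ) * (z 2 * z 2) * z 3 := by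
      funext z; rw [hW]; ring
    rw [hWe]
    have h := fun i : Fin 5 => hasFDerivAt_apply (𝕜 := ℂ) i z
    have H := (((((h 0).const_mul (lam : ℂ)).mul (((h 3).mul (h 4)).sub_const ((m:ℂ)^2))).add
        (((h 1).const_mul (mu : ℂ)).mul (h 3))).add
        (((h 2).const_mul (nu : ℂ)).mul (h 4))).add
        ((((h 4).mul (h 4)).const_mul (sig : ℂ)).mul (h 4)) |>.add
        ((((h 2).mul (h 2)).const_mul (eps : ℂ)).mul (h 3))
    refine H.congr_fderiv ?_
    ext v
    simp only [hP, ContinuousLinearMap.add_apply, ContinuousLinearMap.smul_apply,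
      ContinuousLinearMap.proj_apply, smul_eq_mul, Pi.mul_apply]
    ring
  have hfd : ∀ z, fderiv ℂ W' z = (((lam : ℂ) * (z 3 * z 4 - (m : ℂ) ^ 2)) • P 0
        + ((mu : ℂ) * z 3) • P 1
        + ((nu : ℂ) * z 4 + 2 * (eps : ℂ) * z 2 * z 3) • P 2
        + ((lam : ℂ) * z 0 * z 4 + (mu : ℂ) * z 1 + (eps : ℂ) * z 2 ^ 2) • P 3
        + ((lam : ℂ) * z 0 * z 3 + (nu : ℂ) * z 2 + 3 * (sig : ℂ) * z 4 ^ 2) • P 4) :=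
    fun z => (hd z).fderiv
  -- nonzero casts
  have hlamC : (lam : ℂ) ≠ 0 := Complex.ofReal_ne_zero.mpr hlam.ne'
  have hmuC : (mu : ℂ) ≠ 0 := Complex.ofReal_ne_zero.mpr hmu.ne'
  have hepsC : (eps : ℂ) ≠ 0 := Complex.ofReal_ne_zero.mpr heps.ne'
  have main : ∀ α : ℝ,
      fderiv ℂ W' (zpath α) (Pi.single 0 1) = 0 ∧
      fderiv ℂ W' (zpath α) (Pi.single 2 1) = 0 ∧
      fderiv ℂ W' (zpath α) (Pi.single 3 1) = 0 ∧
      fderiv ℂ W' (zpath α) (Pi.single 4 1) = 0 ∧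
      fderiv ℂ W' (zpath α) (Pi.single 1 1) = (mu : ℂ) * Complex.exp (-(α : ℂ)) ∧
      V (zpath α) = mu ^ 2 * Real.exp (-2 * α) := by
    intro α
    have hE : Complex.exp (α : ℂ) ≠ 0 := Complex.exp_ne_zero _
    have e2 : Complex.exp (2 * (α : ℂ)) = Complex.exp (α : ℂ) ^ 2 := by
      rw [show (2 : ℂ) * (α : ℂ) = ((2 : ℕ) : ℂ) * (α : ℂ) by norm_num, Complex.exp_nat_mul]
    have e3 : Complex.exp (3 * (α : ℂ)) = Complex.exp (α : ℂ) ^ 3 := by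
      rw [show (3 : ℂ) * (α : ℂ) = ((3 : ℕ) : ℂ) * (α : ℂ) by norm_num, Complex.exp_nat_mul]
    have e4 : Complex.exp (4 * (α : ℂ)) = Complex.exp (α : ℂ) ^ 4 := by
      rw [show (4 : ℂ) * (α : ℂ) = ((4 : ℕ) : ℂ) * (α : ℂ) by norm_num, Complex.exp_nat_mul]
    have eneg : Complex.exp (-(α : ℂ)) = (Complex.exp (α : ℂ))⁻¹ := Complex.exp_neg _
    have hz0 : zpath α 0 = ((nu ^ 2 * m ^ 2 / (2 * lam * eps) - 3 * sig * m ^ 4 / lam : ℝ) : ℂ) *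
        Complex.exp (3 * (α : ℂ)) := by rw [hzpath]; rfl
    have hz1 : zpath α 1 = ((3 * sig * m ^ 6 / mu - 3 * nu ^ 2 * m ^ 4 / (4 * mu * eps) : ℝ) : ℂ) *
        Complex.exp (4 * (α : ℂ)) := by rw [hzpath]; rfl
    have hz2 : zpath α 2 = -((nu * m ^ 2 / (2 * eps) : ℝ) : ℂ) * Complex.exp (2 * (α : ℂ)) := by
      rw [hzpath]; rfl
    have hz3 : zpath α 3 = Complex.exp (-(α : ℂ)) := by rw [hzpath]; rfl
    have hz4 : zpath α 4 = ((m ^ 2 : ℝ) : ℂ) * Complex.exp ((α : ℂ)) := by rw [hzpath]; rfl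
    have S0 : fderiv ℂ W' (zpath α) (Pi.single 0 1) = 0 := by
      rw [hfd]
      simp only [hP, ContinuousLinearMap.add_apply, ContinuousLinearMap.smul_apply,
        ContinuousLinearMap.proj_apply, smul_eq_mul, Pi.single_apply]
      norm_num
      rw [hz3, hz4, eneg]
      push_cast
      field_simp
      ring
    have S2 : fderiv ℂ W' (zpath α) (Pi.single 2 1) = 0 := by
      rw [hfd]
      simp only [hP, ContinuousLinearMap.add_apply, ContinuousLinearMap.smul_apply,
        ContinuousLinearMap.proj_apply, smul_eq_mul, Pi.single_apply]
      norm_num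
      rw [hz2, hz3, hz4, e2, eneg]
      push_cast
      field_simp
      ring
    have S3 : fderiv ℂ W' (zpath α) (Pi.single 3 1) = 0 := by
      rw [hfd]
      simp only [hP, ContinuousLinearMap.add_apply, ContinuousLinearMap.smul_apply,
        ContinuousLinearMap.proj_apply, smul_eq_mul, Pi.single_apply]
      norm_num
      rw [hz0, hz1, hz2, hz4, e2, e3, e4]
      push_cast
      field_simp
      ring_nf
    have S4 : fderiv ℂ W' (zpath α) (Pi.single 4 1) = 0 := by
      rw [hfd]
      simp only [hP, ContinuousLinearMap.add_apply, ContinuousLinearMap.smul_apply,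
        ContinuousLinearMap.proj_apply, smul_eq_mul, Pi.single_apply]
      norm_num
      rw [hz0, hz2, hz3, hz4, e2, e3, eneg]
      push_cast
      field_simp
      ring_nf
    have S1 : fderiv ℂ W' (zpath α) (Pi.single 1 1) = (mu : ℂ) * Complex.exp (-(α : ℂ)) := by
      rw [hfd]
      simp only [hP, ContinuousLinearMap.add_apply, ContinuousLinearMap.smul_apply,
        ContinuousLinearMap.proj_apply, smul_eq_mul, Pi.single_apply]
      norm_num [Fin.ext_iff]
      rw [hz3]
      exact Or.inl rfl
    have SV : V (zpath α) = mu ^ 2 * Real.exp (-2 * α) := by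
      have hnorm : ‖(mu : ℂ) * Complex.exp (-(α : ℂ))‖ = mu * Real.exp (-α) := by
        rw [norm_mul, Complex.norm_real, Real.norm_eq_abs,
          Complex.norm_exp, abs_of_pos hmu]
        norm_num
      have hexp : Real.exp (-2 * α) = Real.exp (-α) * Real.exp (-α) := by
        rw [← Real.exp_add]; congr 1; ring
      rw [hV, Fin.sum_univ_five, S0, S1, S2, S3, S4, hnorm, hexp]
      simp only [norm_zero, ne_eq, OfNat.ofNat_ne_zero, not_false_eq_true, zero_pow,
        zero_add, add_zero]
      ring
    exact ⟨S0, S2, S3, S4, S1, SV⟩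
  refine ⟨main, ?_, ?_, ?_⟩
  · have h1 : Tendsto (fun α : ℝ => Real.exp (-2 * α)) atTop (nhds 0) := by
      apply Real.tendsto_exp_atBot.comp
      exact (tendsto_const_mul_atBot_of_neg (by norm_num : (-2 : ℝ) < 0)).mpr tendsto_id
          |>.congr (fun x => rfl)
    have := h1.const_mul (mu ^ 2)
    simp only [mul_zero] at this
    refine this.congr (fun α => ?_)
    exact ((main α).2.2.2.2.2).symm
  · have : ∀ α : ℝ, ‖zpath α 4‖ = m ^ 2 * Real.exp α := by
      intro α
      rw [show zpath α 4 = ((m ^ 2 : ℝ) : ℂ) * Complex.exp ((α : ℂ)) by rw [hzpath]; rfl]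
      rw [norm_mul, Complex.norm_real, Real.norm_eq_abs,
        Complex.norm_exp]
      simp [abs_of_pos (pow_pos hm 2)]
    rw [show (fun α : ℝ => ‖zpath α 4‖) = fun α => m ^ 2 * Real.exp α from funext this]
    exact Real.tendsto_exp_atTop.const_mul_atTop (pow_pos hm 2)
  · constructor
    · rintro x ⟨z, rfl⟩
      rw [hV]
      positivity
    · intro b hb
      have hble : ∀ α : ℝ, b ≤ mu ^ 2 * Real.exp (-2 * α) := fun α =>
        ((main α).2.2.2.2.2) ▸ hb ⟨zpath α, rfl⟩
      have h1 : Tendsto (fun α : ℝ => mu ^ 2 * Real.exp (-2 * α)) atTop (nhds 0) := by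
        have : Tendsto (fun α : ℝ => Real.exp (-2 * α)) atTop (nhds 0) := by
          apply Real.tendsto_exp_atBot.comp
          exact (tendsto_const_mul_atBot_of_neg (by norm_num : (-2 : ℝ) < 0)).mpr tendsto_id
              |>.congr (fun x => rfl)
        simpa using this.const_mul (mu ^ 2)
      exact ge_of_tendsto' h1 hble
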